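/- arXiv:2407.09301 — 6 statements merged into one kernel-verified Lean document; each statement's English description precedes it below -/
import Mathlib

section
/- For every probability measures μ, ν on a measurable space with ν absolutely continuous with respect to μ (density f = dν/dμ), the total variation distance satisfies TV(ν, μ) ≤ sqrt(log(1 + χ²(ν | μ))), where χ²(ν | μ) = ∫ f² dμ − 1. -/
open MeasureTheory

/-- Cauchy–Schwarz: `(∫_A f)² ≤ μ(A) ∫_A f²` for nonnegative `f`. -/
lemma cs_aux {α : Type*} [MeasurableSpace α] (μ : Measure α) [IsFiniteMeasure μ]
    {f : α → ℝ} (hf_meas : Measurable f) (hf_nonneg : ∀ x, 0 ≤ f x)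
    (hint : Integrable (fun x => (f x) ^ 2) μ) (A : Set α) (hA : MeasurableSet A) :
    (∫ x in A, f x ∂μ) ^ 2 ≤ (μ A).toReal * ∫ x in A, f x ^ 2 ∂μ := by
  have h2 : MemLp f 2 (μ.restrict A) :=
    ((memLp_two_iff_integrable_sq hf_meas.aestronglyMeasurable).2 hint).restrict A
  have h1 : MemLp (fun _ : α => (1 : ℝ)) 2 (μ.restrict A) := memLp_const 1
  have hpq : Real.HolderConjugate 2 2 := Real.HolderConjugate.two_two
  have hH := integral_mul_le_Lp_mul_Lq_of_nonneg (μ := μ.restrict A) hpq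
    (Filter.Eventually.of_forall hf_nonneg)
    (Filter.Eventually.of_forall (fun _ => zero_le_one))
    (by simpa using h2) (by simpa using h1)
  simp only [mul_one] at hH
  have hμA : ∫ _x in A, (1 : ℝ) ^ (2:ℝ) ∂μ = (μ A).toReal := by
    simp [Real.one_rpow, Measure.real]
  rw [hμA] at hH
  have hrw : ∀ x, f x ^ (2 : ℝ) = f x ^ 2 := fun x => by
    rw [show (2:ℝ) = ((2:ℕ) : ℝ) by norm_num, Real.rpow_natCast]
  simp only [hrw] at hH
  have hI2 : 0 ≤ ∫ x in A, f x ^ 2 ∂μ := integral_nonneg fun x => sq_nonneg _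
  have hμ0 : 0 ≤ (μ A).toReal := ENNReal.toReal_nonneg
  have hint0 : 0 ≤ ∫ x in A, f x ∂μ := integral_nonneg fun x => hf_nonneg x
  calc (∫ x in A, f x ∂μ) ^ 2
      ≤ ((∫ x in A, f x ^ 2 ∂μ) ^ (1/2 : ℝ) * (μ A).toReal ^ (1/2 : ℝ)) ^ 2 := by
        apply pow_le_pow_left₀ hint0 hH
    _ = (μ A).toReal * ∫ x in A, f x ^ 2 ∂μ := by
        rw [mul_pow, ← Real.rpow_natCast ((∫ x in A, f x ^ 2 ∂μ) ^ (1/2:ℝ)) 2,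
          ← Real.rpow_natCast ((μ A).toReal ^ (1/2:ℝ)) 2,
          ← Real.rpow_mul hI2, ← Real.rpow_mul hμ0]
        norm_num [mul_comm]

/-- `t² ≤ log (1 + 4 t²)` for `0 ≤ t ≤ 1`. -/
lemma sq_le_log_aux {t : ℝ} (h0 : 0 ≤ t) (h1 : t ≤ 1) :
    t ^ 2 ≤ Real.log (1 + 4 * t ^ 2) := by
  rw [Real.le_log_iff_exp_le (by positivity)]
  have hs0 : 0 ≤ t ^ 2 := sq_nonneg t
  have hs1 : t ^ 2 ≤ 1 := by nlinarith
  have hconv := convexOn_exp.2 (Set.mem_univ (0:ℝ)) (Set.mem_univ (1:ℝ))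
    (by linarith : (0:ℝ) ≤ 1 - t ^ 2) hs0 (by ring)
  simp only [smul_eq_mul, mul_zero, mul_one, zero_add, Real.exp_zero] at hconv
  have he : Real.exp 1 < 2.7182818286 := Real.exp_one_lt_d9
  calc Real.exp (t ^ 2) ≤ (1 - t ^ 2) + t ^ 2 * Real.exp 1 := by linarith [hconv]
    _ ≤ 1 + 4 * t ^ 2 := by nlinarith

/-- Total variation is bounded by `sqrt (log (1 + χ²))`. -/
theorem tv_le_sqrt_log_one_add_chiSq
    {α : Type*} [MeasurableSpace α] (μ ν : Measure α)
    [IsProbabilityMeasure μ] [IsProbabilityMeasure ν]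
    (f : α → ℝ) (hf_meas : Measurable f) (hf_nonneg : ∀ x, 0 ≤ f x)
    (hν : ν = μ.withDensity (fun x => ENNReal.ofReal (f x)))
    (hint : Integrable (fun x => (f x) ^ 2) μ) :
    ∀ A : Set α, MeasurableSet A →
      |(ν A).toReal - (μ A).toReal| ≤
        Real.sqrt (Real.log (1 + ((∫ x, (f x) ^ 2 ∂μ) - 1))) := by
  intro A hA
  have hIeq : (1 : ℝ) + ((∫ x, (f x) ^ 2 ∂μ) - 1) = ∫ x, (f x) ^ 2 ∂μ := by ring
  rw [hIeq]
  set I : ℝ := ∫ x, (f x) ^ 2 ∂μ with hI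
  -- integrability of f
  have hf_mem : MemLp f 2 μ :=
    (memLp_two_iff_integrable_sq hf_meas.aestronglyMeasurable).2 hint
  have hf_int : Integrable f μ := hf_mem.integrable (by norm_num)
  -- ν of a measurable set as an integral
  have hνset : ∀ B : Set α, MeasurableSet B → (ν B).toReal = ∫ x in B, f x ∂μ := by
    intro B hB
    rw [hν, withDensity_apply _ hB]
    rw [integral_eq_lintegral_of_nonneg_ae
      (Filter.Eventually.of_forall fun x => hf_nonneg x)
      hf_meas.aestronglyMeasurable]
  have hp_eq : (ν A).toReal = ∫ x in A, f x ∂μ := hνset A hA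
  have hpc_eq : (ν Aᶜ).toReal = ∫ x in Aᶜ, f x ∂μ := hνset Aᶜ hA.compl
  set p : ℝ := (ν A).toReal with hpdef
  set q : ℝ := (μ A).toReal with hqdef
  have hp01 : 0 ≤ p ∧ p ≤ 1 :=
    ⟨ENNReal.toReal_nonneg, by
      rw [hpdef]
      exact ENNReal.toReal_le_of_le_ofReal zero_le_one (by simpa using prob_le_one)⟩
  have hq01 : 0 ≤ q ∧ q ≤ 1 :=
    ⟨ENNReal.toReal_nonneg, by
      rw [hqdef]
      exact ENNReal.toReal_le_of_le_ofReal zero_le_one (by simpa using prob_le_one)⟩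
  -- complements
  have hνc : (ν Aᶜ).toReal = 1 - p := by
    rw [hpdef, ← ENNReal.toReal_one, ← measure_univ (μ := ν),
      ← ENNReal.toReal_sub_of_le (measure_mono (Set.subset_univ A)) (measure_ne_top ν _),
      measure_compl hA (measure_ne_top ν A)]
  have hμc : (μ Aᶜ).toReal = 1 - q := by
    rw [hqdef, ← ENNReal.toReal_one, ← measure_univ (μ := μ),
      ← ENNReal.toReal_sub_of_le (measure_mono (Set.subset_univ A)) (measure_ne_top μ _),
      measure_compl hA (measure_ne_top μ A)]
  -- Cauchy-Schwarz on A and Aᶜ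
  have hcs1 : p ^ 2 ≤ q * ∫ x in A, f x ^ 2 ∂μ := by
    rw [hp_eq]; exact cs_aux μ hf_meas hf_nonneg hint A hA
  have hcs2 : (1 - p) ^ 2 ≤ (1 - q) * ∫ x in Aᶜ, f x ^ 2 ∂μ := by
    rw [← hνc, ← hμc, hpc_eq]; exact cs_aux μ hf_meas hf_nonneg hint Aᶜ hA.compl
  -- splitting the second moment
  have hsplit : (∫ x in A, f x ^ 2 ∂μ) + ∫ x in Aᶜ, f x ^ 2 ∂μ = I := by
    rw [hI]; exact integral_add_compl hA hint
  have hI2A : 0 ≤ ∫ x in A, f x ^ 2 ∂μ := integral_nonneg fun x => sq_nonneg _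
  have hI2Ac : 0 ≤ ∫ x in Aᶜ, f x ^ 2 ∂μ := integral_nonneg fun x => sq_nonneg _
  have habs : |p - q| ≤ 1 := by
    rw [abs_le]; constructor <;> linarith [hp01.1, hp01.2, hq01.1, hq01.2]
  have habs0 : 0 ≤ |p - q| := abs_nonneg _
  -- main bound : I ≥ 1 + 4 (p - q)²
  have hkey : 1 + 4 * (p - q) ^ 2 ≤ I := by
    rcases eq_or_lt_of_le hq01.1 with hq0 | hq0
    · -- q = 0 : then p = 0
      rw [← hq0] at hcs1 ⊢
      have hp2 : p ^ 2 ≤ 0 := by linarith [hcs1, mul_nonneg (le_refl (0:ℝ)) hI2A]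
      have hp0 : p = 0 := by
        have := le_antisymm hp2 (sq_nonneg p)
        exact pow_eq_zero_iff (n := 2) (by norm_num) |>.mp this
      rw [hp0]
      have h1I : 1 ≤ I := by
        have hc : (1 - p) ^ 2 ≤ (1 - q) * ∫ x in Aᶜ, f x ^ 2 ∂μ := hcs2
        rw [hp0, ← hq0] at hc
        simp only [sub_zero, one_pow, one_mul] at hc
        linarith
      norm_num; linarith
    rcases eq_or_lt_of_le hq01.2 with hq1 | hq1
    · -- q = 1 : then p = 1
      rw [hq1] at hcs2 ⊢
      have hp2 : (1 - p) ^ 2 ≤ 0 := by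
        have : (1 - (1:ℝ)) * ∫ x in Aᶜ, f x ^ 2 ∂μ = 0 := by ring
        linarith [hcs2, this]
      have hp1 : p = 1 := by
        have h0 : (1 - p) ^ 2 = 0 := le_antisymm hp2 (sq_nonneg _)
        have := pow_eq_zero_iff (n := 2) (by norm_num) |>.mp h0
        linarith
      rw [hp1]
      have h1I : 1 ≤ I := by
        have hc : p ^ 2 ≤ q * ∫ x in A, f x ^ 2 ∂μ := hcs1
        rw [hp1, hq1] at hc
        simp only [one_pow, one_mul] at hc
        linarith
      norm_num; linarith
    -- 0 < q < 1
    have hqq : 0 < q * (1 - q) := mul_pos hq0 (by linarith)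
    have h1 : p ^ 2 * (1 - q) ≤ q * (1 - q) * ∫ x in A, f x ^ 2 ∂μ := by
      have := mul_le_mul_of_nonneg_right hcs1 (by linarith : (0:ℝ) ≤ 1 - q)
      linarith [this]
    have h2 : (1 - p) ^ 2 * q ≤ q * (1 - q) * ∫ x in Aᶜ, f x ^ 2 ∂μ := by
      have := mul_le_mul_of_nonneg_right hcs2 (by linarith : (0:ℝ) ≤ q)
      linarith [this]
    have hs2 : q * (1 - q) * (∫ x in A, f x ^ 2 ∂μ) + q * (1 - q) * (∫ x in Aᶜ, f x ^ 2 ∂μ)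
        = q * (1 - q) * I := by rw [← mul_add, hsplit]
    have h3 : p ^ 2 * (1 - q) + (1 - p) ^ 2 * q ≤ q * (1 - q) * I := by linarith
    have hid : p ^ 2 * (1 - q) + (1 - p) ^ 2 * q = q * (1 - q) + (p - q) ^ 2 := by ring
    have h5 : 4 * (p - q) ^ 2 * (q * (1 - q)) ≤ (p - q) ^ 2 := by
      nlinarith [mul_nonneg (sq_nonneg (p - q)) (sq_nonneg (1 - 2 * q))]
    have h4 : (1 + 4 * (p - q) ^ 2) * (q * (1 - q)) ≤ I * (q * (1 - q)) := by
      have hexp : (1 + 4 * (p - q) ^ 2) * (q * (1 - q))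
          = q * (1 - q) + 4 * (p - q) ^ 2 * (q * (1 - q)) := by ring
      linarith [h3, hid, h5, hexp]
    exact le_of_mul_le_mul_right h4 hqq
  -- finish
  have hIpos : 0 < I := by linarith [hkey, sq_nonneg (p - q)]
  have hlog : |p - q| ^ 2 ≤ Real.log I := by
    calc |p - q| ^ 2 ≤ Real.log (1 + 4 * |p - q| ^ 2) := sq_le_log_aux habs0 habs
      _ ≤ Real.log I := by
          apply Real.log_le_log (by positivity)
          rw [sq_abs]; exact hkey
  rw [← Real.sqrt_sq habs0]
  exact Real.sqrt_le_sqrt hlog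
end

section
/- Let μ₁, μ₂, μ₃ be probability measures on the same space, mutually absolutely continuous. Then D(μ₃ | μ₁) ≤ 2 D(μ₃ | μ₂) + log(1 + χ²(μ₂ | μ₁)), where D denotes relative entropy (Kullback–Leibler divergence) and χ² the chi-square divergence. -/
open MeasureTheory
open scoped ENNReal NNReal

/-- If `f > 0`, `f` integrable w.r.t. a probability measure with positive integral `I`,
then `∫ log f ≤ log I` (Jensen via `log t ≤ t - 1`). -/
lemma integral_log_le_log_integral_aux {α : Type*} [MeasurableSpace α] (μ : Measure α)
    [IsProbabilityMeasure μ] (f : α → ℝ) (hf_pos : ∀ x, 0 < f x)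
    (hf_int : Integrable f μ) (hlog_int : Integrable (fun x => Real.log (f x)) μ)
    (hI : 0 < ∫ x, f x ∂μ) :
    ∫ x, Real.log (f x) ∂μ ≤ Real.log (∫ x, f x ∂μ) := by
  set I := ∫ x, f x ∂μ with hIdef
  have hpt : ∀ x, Real.log (f x) ≤ f x / I - 1 + Real.log I := by
    intro x
    have h1 : Real.log (f x / I) ≤ f x / I - 1 :=
      Real.log_le_sub_one_of_pos (div_pos (hf_pos x) hI)
    have h2 : Real.log (f x / I) = Real.log (f x) - Real.log I :=
      Real.log_div (ne_of_gt (hf_pos x)) (ne_of_gt hI)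
    linarith
  have hint_rhs : Integrable (fun x => f x / I - 1 + Real.log I) μ := by
    exact (((hf_int.div_const I).sub (integrable_const 1)).add (integrable_const _))
  have h1 : Integrable (fun x => f x / I - 1) μ := (hf_int.div_const I).sub (integrable_const 1)
  have h2 : Integrable (fun x => f x / I) μ := hf_int.div_const I
  calc ∫ x, Real.log (f x) ∂μ ≤ ∫ x, (f x / I - 1 + Real.log I) ∂μ :=
        integral_mono hlog_int hint_rhs hpt
    _ = Real.log I := by
        rw [integral_add h1 (integrable_const _), integral_sub h2 (integrable_const 1),
          integral_div, integral_const, integral_const]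
        simp [← hIdef, div_self (ne_of_gt hI)]

/-- Approximate triangle inequality for relative entropy:
`D(μ₃ | μ₁) ≤ 2 D(μ₃ | μ₂) + log (1 + χ²(μ₂ | μ₁))`. -/
theorem relEntropy_triangle
    {α : Type*} [MeasurableSpace α] (μ₁ μ₂ μ₃ : Measure α)
    [IsProbabilityMeasure μ₁] [IsProbabilityMeasure μ₂] [IsProbabilityMeasure μ₃]
    (g₁ g₂ h : α → ℝ)
    (hg₁_meas : Measurable g₁) (hg₂_meas : Measurable g₂) (hh_meas : Measurable h)
    (hg₁_pos : ∀ x, 0 < g₁ x) (hg₂_pos : ∀ x, 0 < g₂ x) (hh_pos : ∀ x, 0 < h x)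
    (h₃₁ : μ₃ = μ₁.withDensity (fun x => ENNReal.ofReal (g₁ x)))
    (h₃₂ : μ₃ = μ₂.withDensity (fun x => ENNReal.ofReal (g₂ x)))
    (h₂₁ : μ₂ = μ₁.withDensity (fun x => ENNReal.ofReal (h x)))
    (hint₁ : Integrable (fun x => Real.log (g₁ x)) μ₃)
    (hint₂ : Integrable (fun x => Real.log (g₂ x)) μ₃)
    (hinth : Integrable (fun x => (h x) ^ 2) μ₁) :
    ∫ x, Real.log (g₁ x) ∂μ₃ ≤
      2 * ∫ x, Real.log (g₂ x) ∂μ₃ +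
        Real.log (1 + ((∫ x, (h x) ^ 2 ∂μ₁) - 1)) := by
  -- density identity: g₁ = h * g₂ a.e. μ₁
  have hcomp : μ₁.withDensity (fun x => ENNReal.ofReal (g₁ x)) =
      μ₁.withDensity (fun x => ENNReal.ofReal (h x) * ENNReal.ofReal (g₂ x)) := by
    rw [show (fun x => ENNReal.ofReal (h x) * ENNReal.ofReal (g₂ x)) =
        (fun x => ENNReal.ofReal (h x)) * (fun x => ENNReal.ofReal (g₂ x)) from rfl,
      withDensity_mul μ₁ hh_meas.ennreal_ofReal hg₂_meas.ennreal_ofReal,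
      ← h₂₁, ← h₃₂, h₃₁]
  have hfin : ∫⁻ x, ENNReal.ofReal (g₁ x) ∂μ₁ ≠ ⊤ := by
    have : ∫⁻ x, ENNReal.ofReal (g₁ x) ∂μ₁ = μ₃ Set.univ := by
      rw [h₃₁, withDensity_apply _ MeasurableSet.univ, setLIntegral_univ]
    rw [this]
    simp
  have hae : (fun x => ENNReal.ofReal (g₁ x)) =ᵐ[μ₁]
      (fun x => ENNReal.ofReal (h x) * ENNReal.ofReal (g₂ x)) :=
    (withDensity_eq_iff hg₁_meas.ennreal_ofReal.aemeasurable
      (hh_meas.ennreal_ofReal.mul hg₂_meas.ennreal_ofReal).aemeasurable hfin).mp hcomp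
  have hae' : ∀ᵐ x ∂μ₁, g₁ x = h x * g₂ x := by
    filter_upwards [hae] with x hx
    rw [← ENNReal.ofReal_mul (hh_pos x).le] at hx
    exact (ENNReal.ofReal_eq_ofReal_iff (hg₁_pos x).le
      (mul_nonneg (hh_pos x).le (hg₂_pos x).le)).mp hx
  have hac : μ₃ ≪ μ₁ := by rw [h₃₁]; exact withDensity_absolutelyContinuous _ _
  have hae₃ : ∀ᵐ x ∂μ₃, g₁ x = h x * g₂ x := hac.ae_le hae'
  -- express μ₃, μ₂ as withDensity with NNReal densities
  have h₃₂' : μ₃ = μ₂.withDensity (fun x => ((g₂ x).toNNReal : ℝ≥0∞)) := h₃₂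
  have h₂₁' : μ₂ = μ₁.withDensity (fun x => ((h x).toNNReal : ℝ≥0∞)) := h₂₁
  set f : α → ℝ := fun x => h x / g₂ x with hfdef
  have hg₂nn : Measurable fun x => (g₂ x).toNNReal := hg₂_meas.real_toNNReal
  have hhnn : Measurable fun x => (h x).toNNReal := hh_meas.real_toNNReal
  -- computation of ∫ f dμ₃
  have hsmul₂ : ∀ x, (g₂ x).toNNReal • f x = h x := by
    intro x
    simp only [NNReal.smul_def, smul_eq_mul, Real.coe_toNNReal _ (hg₂_pos x).le, hfdef]
    rw [mul_comm, div_mul_cancel₀ _ (ne_of_gt (hg₂_pos x))]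
  have hsmul₁ : ∀ x, (h x).toNNReal • h x = (h x) ^ 2 := by
    intro x
    simp only [NNReal.smul_def, smul_eq_mul, Real.coe_toNNReal _ (hh_pos x).le]
    ring
  have hinth₂ : Integrable h μ₂ := by
    rw [h₂₁', integrable_withDensity_iff_integrable_smul hhnn]
    exact hinth.congr (Filter.Eventually.of_forall fun x => (hsmul₁ x).symm)
  have hintf : Integrable f μ₃ := by
    rw [h₃₂', integrable_withDensity_iff_integrable_smul hg₂nn]
    exact hinth₂.congr (Filter.Eventually.of_forall fun x => (hsmul₂ x).symm)
  have hI₂ : ∫ x, h x ∂μ₂ = ∫ x, (h x) ^ 2 ∂μ₁ := by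
    rw [h₂₁', integral_withDensity_eq_integral_smul hhnn]
    exact integral_congr_ae (Filter.Eventually.of_forall hsmul₁)
  have hI : ∫ x, f x ∂μ₃ = ∫ x, (h x) ^ 2 ∂μ₁ := by
    rw [h₃₂', integral_withDensity_eq_integral_smul hg₂nn, ← hI₂]
    exact integral_congr_ae (Filter.Eventually.of_forall hsmul₂)
  -- positivity of the integral
  have hIpos : 0 < ∫ x, (h x) ^ 2 ∂μ₁ := by
    rw [integral_pos_iff_support_of_nonneg (fun x => sq_nonneg _) hinth]
    have : (Function.support fun x => (h x) ^ 2) = Set.univ := by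
      ext x
      simp only [Function.mem_support, Set.mem_univ, iff_true]
      exact ne_of_gt (pow_pos (hh_pos x) 2)
    rw [this]
    simp
  -- integrability of log f on μ₃
  have hlogf_ae : (fun x => Real.log (f x)) =ᵐ[μ₃]
      (fun x => Real.log (g₁ x) - 2 * Real.log (g₂ x)) := by
    filter_upwards [hae₃] with x hx
    rw [hfdef]
    simp only [Real.log_div (ne_of_gt (hh_pos x)) (ne_of_gt (hg₂_pos x)), hx,
      Real.log_mul (ne_of_gt (hh_pos x)) (ne_of_gt (hg₂_pos x))]
    ring
  have hlogf_int : Integrable (fun x => Real.log (f x)) μ₃ :=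
    (hint₁.sub (hint₂.const_mul 2)).congr hlogf_ae.symm
  -- Jensen bound
  have hmain : ∫ x, Real.log (f x) ∂μ₃ ≤ Real.log (∫ x, f x ∂μ₃) :=
    integral_log_le_log_integral_aux μ₃ f
      (fun x => div_pos (hh_pos x) (hg₂_pos x)) hintf hlogf_int (by rw [hI]; exact hIpos)
  -- put it together
  have hsplit : ∫ x, Real.log (g₁ x) ∂μ₃ =
      2 * ∫ x, Real.log (g₂ x) ∂μ₃ + ∫ x, Real.log (f x) ∂μ₃ := by
    have := integral_congr_ae hlogf_ae
    rw [this, integral_sub hint₁ (hint₂.const_mul 2)]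
    have h2 : ∫ x, 2 * Real.log (g₂ x) ∂μ₃ = 2 * ∫ x, Real.log (g₂ x) ∂μ₃ :=
      integral_const_mul 2 _
    rw [h2]; ring
  rw [hsplit]
  have : (1 : ℝ) + ((∫ x, (h x) ^ 2 ∂μ₁) - 1) = ∫ x, (h x) ^ 2 ∂μ₁ := by ring
  rw [this, ← hI]
  linarith [hmain]
end

section
/- For any probability measures μ₃ ≪ μ₁ on a space E and any positive measurable function f with ∫ f dμ₁ < ∞ and ∫ log f dμ₃ well-defined, one has ∫ log f dμ₃ ≤ log(∫ f dμ₁) + D(μ₃ | μ₁). -/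
open MeasureTheory

/-- Donsker–Varadhan type inequality:
`∫ log f dμ₃ ≤ log (∫ f dμ₁) + D(μ₃ | μ₁)`. -/
theorem log_integral_le_log_add_relEntropy
    {α : Type*} [MeasurableSpace α] (μ₁ μ₃ : Measure α)
    [IsProbabilityMeasure μ₁] [IsProbabilityMeasure μ₃]
    (g : α → ℝ) (hg_meas : Measurable g) (hg_nonneg : ∀ x, 0 ≤ g x)
    (h₃₁ : μ₃ = μ₁.withDensity (fun x => ENNReal.ofReal (g x)))
    (f : α → ℝ) (hf_meas : Measurable f) (hf_pos : ∀ x, 0 < f x)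
    (hf_int : Integrable f μ₁)
    (hlogf_int : Integrable (fun x => Real.log (f x)) μ₃)
    (hD_int : Integrable (fun x => Real.log (g x)) μ₃) :
    ∫ x, Real.log (f x) ∂μ₃ ≤
      Real.log (∫ x, f x ∂μ₁) + ∫ x, Real.log (g x) ∂μ₃ := by
  set c := ∫ x, f x ∂μ₁ with hc_def
  have hc_pos : 0 < c := by
    rw [hc_def, integral_pos_iff_support_of_nonneg (fun x => (hf_pos x).le) hf_int]
    have : Function.support f = Set.univ := by
      ext x; simp [Function.mem_support, (hf_pos x).ne']
    rw [this]
    simp [measure_univ]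
  -- a.e. positivity of g under μ₃
  have hg_pos : ∀ᵐ x ∂μ₃, 0 < g x := by
    rw [ae_iff]
    have hS : MeasurableSet {x | ¬ 0 < g x} := (measurableSet_lt measurable_const hg_meas).compl
    rw [h₃₁, withDensity_apply _ hS]
    have : ∀ x ∈ {x | ¬ 0 < g x}, ENNReal.ofReal (g x) = 0 := by
      intro x hx
      simp only [Set.mem_setOf_eq, not_lt] at hx
      simp [ENNReal.ofReal_eq_zero.mpr hx]
    rw [setLIntegral_congr_fun hS (fun x hx => this x hx)]
    simp
  set h : α → ℝ := fun x => f x / g x with hh_def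
  have hh_meas : Measurable h := hf_meas.div hg_meas
  -- key lintegral bound
  have hkey : ∫⁻ x, ENNReal.ofReal (h x) ∂μ₃ ≤ ∫⁻ x, ENNReal.ofReal (f x) ∂μ₁ := by
    rw [h₃₁, lintegral_withDensity_eq_lintegral_mul _ (hg_meas.ennreal_ofReal)
      (hh_meas.ennreal_ofReal)]
    refine lintegral_mono fun x => ?_
    rcases lt_or_eq_of_le (hg_nonneg x) with hx | hx
    · rw [Pi.mul_apply, ← ENNReal.ofReal_mul (hg_nonneg x)]
      rw [hh_def]
      simp only
      rw [mul_div_cancel₀ _ hx.ne']  -- g x * (f x / g x)?? careful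
    · simp [Pi.mul_apply, ← hx]
  have hfin : ∫⁻ x, ENNReal.ofReal (f x) ∂μ₁ < ⊤ := hf_int.lintegral_lt_top
  have hh_nonneg : ∀ᵐ x ∂μ₃, 0 ≤ h x := by
    filter_upwards [hg_pos] with x hx
    exact div_nonneg (hf_pos x).le hx.le
  have hh_int : Integrable h μ₃ := by
    refine ⟨hh_meas.aestronglyMeasurable, ?_⟩
    rw [hasFiniteIntegral_iff_norm]
    calc ∫⁻ x, ENNReal.ofReal ‖h x‖ ∂μ₃
        = ∫⁻ x, ENNReal.ofReal (h x) ∂μ₃ := by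
          refine lintegral_congr_ae ?_
          filter_upwards [hh_nonneg] with x hx
          rw [Real.norm_of_nonneg hx]
      _ ≤ ∫⁻ x, ENNReal.ofReal (f x) ∂μ₁ := hkey
      _ < ⊤ := hfin
  have hint_h : ∫ x, h x ∂μ₃ ≤ c := by
    rw [integral_eq_lintegral_of_nonneg_ae hh_nonneg hh_meas.aestronglyMeasurable]
    have hc_eq : c = (∫⁻ x, ENNReal.ofReal (f x) ∂μ₁).toReal := by
      rw [hc_def, integral_eq_lintegral_of_nonneg_ae
        (Filter.Eventually.of_forall fun x => (hf_pos x).le) hf_meas.aestronglyMeasurable]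
    rw [hc_eq]
    exact ENNReal.toReal_mono hfin.ne hkey
  -- log h integrable
  have hlog_eq : ∀ᵐ x ∂μ₃, Real.log (h x) = Real.log (f x) - Real.log (g x) := by
    filter_upwards [hg_pos] with x hx
    rw [hh_def]; exact Real.log_div (hf_pos x).ne' hx.ne'
  have hlogh_int : Integrable (fun x => Real.log (h x)) μ₃ :=
    (hlogf_int.sub hD_int).congr (by filter_upwards [hlog_eq] with x hx; simp [hx])
  -- pointwise bound
  have hbound : ∀ᵐ x ∂μ₃, Real.log (h x) ≤ h x / c - 1 + Real.log c := by
    filter_upwards [hg_pos] with x hx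
    have hhx : 0 < h x := div_pos (hf_pos x) hx
    have := Real.log_le_sub_one_of_pos (div_pos hhx hc_pos)
    rw [Real.log_div hhx.ne' hc_pos.ne'] at this
    linarith
  have hstep : ∫ x, Real.log (h x) ∂μ₃ ≤ Real.log c := by
    have h1 : ∫ x, Real.log (h x) ∂μ₃ ≤ ∫ x, (h x / c - 1 + Real.log c) ∂μ₃ := by
      refine integral_mono_ae hlogh_int ?_ hbound
      exact (((hh_int.div_const c).sub (integrable_const 1)).add (integrable_const _))
    have h2 : ∫ x, (h x / c - 1 + Real.log c) ∂μ₃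
        = (∫ x, h x ∂μ₃) / c - 1 + Real.log c := by
      have hint1 : Integrable (fun x => h x / c - 1) μ₃ :=
        (hh_int.div_const c).sub (integrable_const 1)
      rw [integral_add hint1 (integrable_const _),
        integral_sub (hh_int.div_const c) (integrable_const 1), integral_div]
      simp
    have h3 : (∫ x, h x ∂μ₃) / c - 1 ≤ 0 := by
      rw [sub_nonpos, div_le_one hc_pos]
      exact hint_h
    linarith
  -- combine
  have hfinal : ∫ x, Real.log (f x) ∂μ₃
      = ∫ x, Real.log (h x) ∂μ₃ + ∫ x, Real.log (g x) ∂μ₃ := by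
    rw [← integral_add hlogh_int hD_int]
    refine integral_congr_ae ?_
    filter_upwards [hlog_eq] with x hx
    rw [hx]; ring
  rw [hfinal]
  linarith
end

section
/- There exists a universal constant C > 0 such that for all real λ ≥ 1, ∑_{n odd, n≥1} n⁶ / (n⁴ + λ²)² ≤ C ∑_{n odd, n≥1} λ / (n⁴ + λ²). -/
open Finset Filter

private lemma telescope_hasSum (K : ℕ) (hK : 1 ≤ K) :
    HasSum (fun k : ℕ => (1:ℝ)/((k:ℝ)+K) - 1/((k:ℝ)+K+1)) (1/(K:ℝ)) := by
  have hKpos : (0:ℝ) < K := by exact_mod_cast hK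
  have hnn : ∀ k : ℕ, (0:ℝ) ≤ (1:ℝ)/((k:ℝ)+K) - 1/((k:ℝ)+K+1) := by
    intro k
    have h1 : (0:ℝ) < (k:ℝ)+K := by positivity
    have h2 : (0:ℝ) < (k:ℝ)+K+1 := by positivity
    have := one_div_le_one_div_of_le h1 (by linarith : (k:ℝ)+K ≤ (k:ℝ)+K+1)
    linarith
  rw [hasSum_iff_tendsto_nat_of_nonneg hnn]
  have hps : ∀ n : ℕ, ∑ i ∈ range n, ((1:ℝ)/((i:ℝ)+K) - 1/((i:ℝ)+K+1))
      = 1/(K:ℝ) - 1/((n:ℝ)+K) := by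
    intro n
    have := Finset.sum_range_sub' (f := fun i : ℕ => (1:ℝ)/((i:ℝ)+K)) n
    simpa [Nat.cast_add, Nat.cast_one, add_right_comm] using this
  simp only [hps]
  have h0' : Tendsto (fun n : ℕ => ((n:ℝ)+K)) atTop atTop :=
    tendsto_atTop_add_const_right atTop _ tendsto_natCast_atTop_atTop
  have h0 : Tendsto (fun n : ℕ => (1:ℝ)/((n:ℝ)+K)) atTop (nhds 0) := by
    simp only [one_div]; exact h0'.inv_tendsto_atTop
  have := (tendsto_const_nhds (x := 1/(K:ℝ)) (f := atTop)).sub h0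
  simpa using this

set_option maxHeartbeats 1000000 in
/-- Key pointwise spectral inequality: for all `λ ≥ 1`,
`∑_{n odd} n⁶/(n⁴+λ²)² ≤ C ∑_{n odd} λ/(n⁴+λ²)`. -/
theorem odd_sum_spectral_inequality :
    ∃ C : ℝ, 0 < C ∧ ∀ l : ℝ, 1 ≤ l →
      (∑' k : ℕ, ((2 * (k : ℝ) + 1) ^ 6 / ((2 * (k : ℝ) + 1) ^ 4 + l ^ 2) ^ 2)) ≤
        C * ∑' k : ℕ, (l / ((2 * (k : ℝ) + 1) ^ 4 + l ^ 2)) := by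
  refine ⟨68, by norm_num, fun l hl => ?_⟩
  have hl0 : (0:ℝ) < l := by linarith
  set s := Real.sqrt l with hs
  have hs1 : 1 ≤ s := by
    rw [hs, show (1:ℝ) = Real.sqrt 1 by simp]
    exact Real.sqrt_le_sqrt hl
  have hs0 : 0 < s := by linarith
  have hssq : s ^ 2 = l := Real.sq_sqrt hl0.le
  have hden : ∀ k : ℕ, (0:ℝ) < (2 * (k : ℝ) + 1) ^ 4 + l ^ 2 := fun k => by positivity
  -- summability
  have hbasel : Summable (fun k : ℕ => (1:ℝ) / ((k:ℝ)+1)^2) := by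
    have := (Real.summable_one_div_nat_pow (p := 2)).2 (by norm_num)
    have h2 := (summable_nat_add_iff (f := fun n : ℕ => (1:ℝ) / (n:ℝ)^2) 1).2 this
    simpa using h2
  have hfle : ∀ k : ℕ,
      (2 * (k : ℝ) + 1) ^ 6 / ((2 * (k : ℝ) + 1) ^ 4 + l ^ 2) ^ 2 ≤ 1 / ((k:ℝ)+1)^2 := by
    intro k
    have hk0 : (0:ℝ) ≤ (k:ℝ) := Nat.cast_nonneg k
    rw [div_le_div_iff₀ (by positivity) (by positivity)]
    nlinarith [sq_nonneg l, pow_nonneg hk0 2, pow_nonneg (by linarith : (0:ℝ) ≤ 2*(k:ℝ)+1) 6,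
      mul_nonneg (pow_nonneg (by linarith : (0:ℝ) ≤ 2*(k:ℝ)+1) 4) (sq_nonneg l),
      mul_nonneg (pow_nonneg (by linarith : (0:ℝ) ≤ 2*(k:ℝ)+1) 6)
        (mul_nonneg hk0 (by linarith : (0:ℝ) ≤ 3*(k:ℝ)+2))]
  have hf : Summable (fun k : ℕ =>
      (2 * (k : ℝ) + 1) ^ 6 / ((2 * (k : ℝ) + 1) ^ 4 + l ^ 2) ^ 2) := by
    apply Summable.of_nonneg_of_le (fun k => by positivity) hfle hbasel
  have hg : Summable (fun k : ℕ => l / ((2 * (k : ℝ) + 1) ^ 4 + l ^ 2)) := by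
    apply Summable.of_nonneg_of_le (fun k => by positivity) ?_ (hbasel.mul_left l)
    intro k
    have hk0 : (0:ℝ) ≤ (k:ℝ) := Nat.cast_nonneg k
    rw [mul_one_div, div_le_div_iff₀ (by positivity) (by positivity)]
    have h1 : ((k:ℝ)+1)^2 ≤ (2*(k:ℝ)+1)^2 := by nlinarith
    have h2 : (2*(k:ℝ)+1)^2 ≤ (2*(k:ℝ)+1)^4 := by nlinarith [sq_nonneg (2*(k:ℝ)+1)]
    have h3 : ((k:ℝ)+1)^2 ≤ (2*(k:ℝ)+1)^4 + l^2 := by nlinarith [sq_nonneg l]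
    exact mul_le_mul_of_nonneg_left h3 hl0.le
  -- the split point
  set K := ⌈s⌉₊ with hKdef
  have hK1 : 1 ≤ K := Nat.one_le_ceil_iff.2 hs0
  have hKs : s ≤ (K:ℝ) := Nat.le_ceil s
  have hK2s : (K:ℝ) ≤ 2*s := by
    have := (Nat.ceil_lt_add_one hs0.le).le
    linarith
  -- upper bound on LHS
  have hsplit := (Summable.sum_add_tsum_nat_add (f := fun k : ℕ =>
      (2 * (k : ℝ) + 1) ^ 6 / ((2 * (k : ℝ) + 1) ^ 4 + l ^ 2) ^ 2) K hf)
  have hhead : ∑ k ∈ range K,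
      (2 * (k : ℝ) + 1) ^ 6 / ((2 * (k : ℝ) + 1) ^ 4 + l ^ 2) ^ 2 ≤ (K:ℝ) * (1/(2*l)) := by
    calc ∑ k ∈ range K, (2 * (k : ℝ) + 1) ^ 6 / ((2 * (k : ℝ) + 1) ^ 4 + l ^ 2) ^ 2
        ≤ ∑ _k ∈ range K, (1/(2*l)) := by
          apply Finset.sum_le_sum
          intro k _
          have hk0 : (0:ℝ) ≤ (k:ℝ) := Nat.cast_nonneg k
          rw [div_le_div_iff₀ (by positivity) (by positivity)]
          nlinarith [mul_nonneg (sq_nonneg ((2*(k:ℝ)+1)^2 - l))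
            (pow_nonneg (by linarith : (0:ℝ) ≤ 2*(k:ℝ)+1) 4),
            mul_nonneg (pow_nonneg (by linarith : (0:ℝ) ≤ 2*(k:ℝ)+1) 4) (sq_nonneg l),
            sq_nonneg (l^2)]
      _ = (K:ℝ) * (1/(2*l)) := by simp [mul_comm]
  have htel := telescope_hasSum K hK1
  have htail : (∑' k : ℕ, (2 * ((k + K : ℕ) : ℝ) + 1) ^ 6 /
      ((2 * ((k + K : ℕ) : ℝ) + 1) ^ 4 + l ^ 2) ^ 2) ≤ 1/(4*(K:ℝ)) := by
    have hKpos : (0:ℝ) < K := by exact_mod_cast hK1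
    have hle : ∀ k : ℕ, (2 * ((k + K : ℕ) : ℝ) + 1) ^ 6 /
        ((2 * ((k + K : ℕ) : ℝ) + 1) ^ 4 + l ^ 2) ^ 2
        ≤ (1/4) * ((1:ℝ)/((k:ℝ)+K) - 1/((k:ℝ)+K+1)) := by
      intro k
      have hk0 : (0:ℝ) ≤ (k:ℝ) := Nat.cast_nonneg k
      have hcast : ((k + K : ℕ) : ℝ) = (k:ℝ) + K := by push_cast; ring
      rw [hcast]
      set m : ℝ := (k:ℝ) + K with hm
      have hm1 : (1:ℝ) ≤ m := by rw [hm]; linarith [hKpos, hK1]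
      have hmK : (1:ℝ) ≤ (K:ℝ) := by exact_mod_cast hK1
      have hm1' : (1:ℝ) ≤ m := by rw [hm]; linarith
      have hm0 : (0:ℝ) < m := by linarith
      have heq : (1/4) * ((1:ℝ)/m - 1/(m+1)) = 1/(4*m*(m+1)) := by
        field_simp
        ring
      rw [heq]
      have hn0 : (0:ℝ) < 2*m+1 := by linarith
      calc (2*m+1)^6 / ((2*m+1)^4 + l^2)^2 ≤ (2*m+1)^6 / ((2*m+1)^4)^2 := by
            rw [div_le_div_iff₀ (by positivity) (by positivity)]
            nlinarith [mul_nonneg (pow_nonneg hn0.le 6)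
                (mul_nonneg (pow_nonneg hn0.le 4) (sq_nonneg l)),
              mul_nonneg (pow_nonneg hn0.le 6) (sq_nonneg (l^2))]
        _ = 1/(2*m+1)^2 := by
            rw [show ((2*m+1)^4)^2 = (2*m+1)^6 * (2*m+1)^2 by ring]
            rw [div_mul_eq_div_div, div_self (by positivity)]
        _ ≤ 1/(4*m*(m+1)) := by
            apply one_div_le_one_div_of_le (by positivity)
            nlinarith
    calc (∑' k : ℕ, (2 * ((k + K : ℕ) : ℝ) + 1) ^ 6 /
        ((2 * ((k + K : ℕ) : ℝ) + 1) ^ 4 + l ^ 2) ^ 2)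
        ≤ ∑' k : ℕ, (1/4) * ((1:ℝ)/((k:ℝ)+K) - 1/((k:ℝ)+K+1)) := by
          apply Summable.tsum_le_tsum hle
          · exact (summable_nat_add_iff K).2 hf
          · exact (htel.mul_left (1/4)).summable
      _ = (1/4) * (1/(K:ℝ)) := (htel.mul_left (1/4)).tsum_eq
      _ = 1/(4*(K:ℝ)) := by rw [one_div_mul_one_div]
  have hLHS : (∑' k : ℕ, ((2 * (k : ℝ) + 1) ^ 6 / ((2 * (k : ℝ) + 1) ^ 4 + l ^ 2) ^ 2))
      ≤ 2/s := by
    rw [← hsplit]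
    have h1 : (K:ℝ) * (1/(2*l)) ≤ 1/s := by
      rw [show l = s^2 from hssq.symm]
      rw [mul_one_div, div_le_div_iff₀ (by positivity) (by positivity)]
      nlinarith
    have h2 : 1/(4*(K:ℝ)) ≤ 1/(4*s) := by
      apply one_div_le_one_div_of_le (by positivity)
      linarith
    have h3 : 1/s + 1/(4*s) ≤ 2/s := by
      rw [div_add_div _ _ (by positivity) (by positivity), div_le_div_iff₀ (by positivity) (by positivity)]
      ring_nf
      nlinarith
    linarith [hhead, htail]
  -- lower bound on RHS
  set M := ⌈s/2⌉₊ with hMdef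
  have hM1 : 1 ≤ M := Nat.one_le_ceil_iff.2 (by positivity)
  have hMs : s/2 ≤ (M:ℝ) := Nat.le_ceil _
  have hM2 : (M:ℝ) ≤ s/2 + 1 := (Nat.ceil_lt_add_one (by positivity)).le
  have hRHS : 1/(34*s) ≤ ∑' k : ℕ, (l / ((2 * (k : ℝ) + 1) ^ 4 + l ^ 2)) := by
    have hterm : ∀ k ∈ range M, 1/(17*l) ≤ l / ((2 * (k : ℝ) + 1) ^ 4 + l ^ 2) := by
      intro k hk
      have hkM : (k:ℝ) ≤ (M:ℝ) - 1 := by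
        have : k + 1 ≤ M := Finset.mem_range.1 hk
        have : ((k:ℝ)) + 1 ≤ (M:ℝ) := by exact_mod_cast this
        linarith
      have hk0 : (0:ℝ) ≤ (k:ℝ) := Nat.cast_nonneg k
      have hn2s : 2*(k:ℝ)+1 ≤ 2*s := by nlinarith
      have hn4 : (2*(k:ℝ)+1)^4 ≤ 16 * l^2 := by
        have := pow_le_pow_left₀ (by linarith : (0:ℝ) ≤ 2*(k:ℝ)+1) hn2s 4
        have h16 : (2*s)^4 = 16 * l^2 := by
          rw [show l = s^2 from hssq.symm]; ring
        linarith
      rw [div_le_div_iff₀ (by positivity) (by positivity)]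
      nlinarith
    have hsum : (M:ℝ) * (1/(17*l)) ≤ ∑ k ∈ range M, l / ((2 * (k : ℝ) + 1) ^ 4 + l ^ 2) := by
      have := Finset.card_nsmul_le_sum (range M) _ _ hterm
      simpa [nsmul_eq_mul] using this
    have hle : ∑ k ∈ range M, l / ((2 * (k : ℝ) + 1) ^ 4 + l ^ 2)
        ≤ ∑' k : ℕ, (l / ((2 * (k : ℝ) + 1) ^ 4 + l ^ 2)) :=
      Summable.sum_le_tsum _ (fun k _ => by positivity) hg
    have hMlb : 1/(34*s) ≤ (M:ℝ) * (1/(17*l)) := by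
      rw [show l = s^2 from hssq.symm, mul_one_div, div_le_div_iff₀ (by positivity) (by positivity)]
      nlinarith
    linarith
  have h68 : 68 * (1/(34*s)) = 2/s := by
    field_simp
    ring
  have h69 : 68 * (1/(34*s)) ≤ 68 * ∑' k : ℕ, (l / ((2 * (k : ℝ) + 1) ^ 4 + l ^ 2)) := by
    linarith [hRHS]
  have h70 : 2/s ≤ 68 * ∑' k : ℕ, (l / ((2 * (k : ℝ) + 1) ^ 4 + l ^ 2)) := by
    rw [← h68]; exact h69
  exact hLHS.trans h70
end

section
/- Let A and B be commuting positive semi-definite self-adjoint (possibly unbounded) operators on a Hilbert space H, with A² + B² injective with dense range. Then the operator AB(A² + B²)^{−1} is bounded with operator norm at most 1/2. -/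
open RealInnerProductSpace

/-- If `A, B` are commuting positive self-adjoint operators on a Hilbert space
and `A² + B²` is injective with dense range, then `AB(A²+B²)⁻¹` is bounded with
operator norm at most `1/2`; equivalently `‖AB x‖ ≤ (1/2) ‖(A²+B²) x‖` for all
`x`. -/
theorem AB_inv_bounded_half
    {H : Type*} [NormedAddCommGroup H] [InnerProductSpace ℝ H] [CompleteSpace H]
    (A B : H →L[ℝ] H)
    (hA : IsSelfAdjoint A) (hB : IsSelfAdjoint B)
    (hA_pos : ∀ x, 0 ≤ ⟪A x, x⟫) (hB_pos : ∀ x, 0 ≤ ⟪B x, x⟫)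
    (hcomm : Commute A B)
    (hinj : Function.Injective ⇑(A ^ 2 + B ^ 2))
    (hdr : DenseRange ⇑(A ^ 2 + B ^ 2)) :
    ∀ x, ‖(A * B) x‖ ≤ (1 / 2) * ‖(A ^ 2 + B ^ 2) x‖ := by
  intro x
  have hAsym := hA.isSymmetric
  have hBsym := hB.isSymmetric
  set u := (A ^ 2) x with hu
  set v := (B ^ 2) x with hv
  set w := (A * B) x with hw
  have hc2 : A * A * B = B * (A * A) := by
    rw [mul_assoc, hcomm.eq, ← mul_assoc, hcomm.eq, mul_assoc]
  have hc2' : A (A (B x)) = B (A (A x)) := congrFun (congrArg DFunLike.coe hc2) x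
  have key : (⟪w, w⟫ : ℝ) = ⟪u, v⟫ := by
    have h1 : (⟪w, w⟫ : ℝ) = ⟪B x, A (A (B x))⟫ := by
      simpa [hw, ContinuousLinearMap.mul_apply] using
        hAsym (B x) (A (B x))
    have h2 := hBsym (B x) (A (A x))
    simp only [ContinuousLinearMap.coe_coe] at h2
    rw [h1, hc2', ← h2, real_inner_comm]
    simp [hu, hv, sq, ContinuousLinearMap.mul_apply]
  have hcs : (⟪u, v⟫ : ℝ) ≤ ‖u‖ * ‖v‖ := real_inner_le_norm u v
  have hexp : ‖u + v‖ ^ 2 = ‖u‖ ^ 2 + 2 * ⟪u, v⟫ + ‖v‖ ^ 2 := by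
    rw [@norm_add_sq_real]
  have hww : (⟪w, w⟫ : ℝ) = ‖w‖ ^ 2 := real_inner_self_eq_norm_sq w
  have hgoal : ‖w‖ ≤ (1 / 2) * ‖u + v‖ := by
    nlinarith [norm_nonneg w, norm_nonneg (u + v), norm_nonneg u, norm_nonneg v,
      sq_nonneg (‖u‖ - ‖v‖)]
  simpa [ContinuousLinearMap.add_apply, hu, hv] using hgoal
end

section
/- Let Q₁, Q₂, Q₃ be bounded operators on a Hilbert space with Q₁ positive definite (injective, positive), Q₂ = Q₃Q₃*, and Q₂ ≤ C·Q₁ in the positive semi-definite order. Then the operator Q₃* Q₁^{−1} Q₃ is well-defined, positive semi-definite, and satisfies Q₃* Q₁^{−1} Q₃ ≤ C·Id. -/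
open RealInnerProductSpace ContinuousLinearMap

/-- If `Q₁` is positive definite (injective and positive), `Q₂ = Q₃ Q₃*` and
`Q₂ ≤ C Q₁`, then `Q₃* Q₁⁻¹ Q₃` (represented as `adjoint Q₃ * T` where
`Q₁ T = Q₃`) is positive semi-definite and bounded above by `C · Id`. -/
theorem Q3_Q1inv_Q3_bounded
    {H : Type*} [NormedAddCommGroup H] [InnerProductSpace ℝ H] [CompleteSpace H]
    (Q₁ Q₂ Q₃ : H →L[ℝ] H) (C : ℝ) (hC : 0 < C)
    (hQ₁_sa : IsSelfAdjoint Q₁) (hQ₁_pos : ∀ x, 0 ≤ ⟪Q₁ x, x⟫)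
    (hQ₁_inj : Function.Injective ⇑Q₁)
    (hQ₂ : Q₂ = Q₃ * adjoint Q₃)
    (hle : ∀ x, ⟪Q₂ x, x⟫ ≤ C * ⟪Q₁ x, x⟫)
    (T : H →L[ℝ] H) (hT : Q₁ * T = Q₃) :
    (∀ x, 0 ≤ ⟪(adjoint Q₃ * T) x, x⟫) ∧
    (∀ x, ⟪(adjoint Q₃ * T) x, x⟫ ≤ C * ‖x‖ ^ 2) := by
  have hQ3 : ∀ x, Q₃ x = Q₁ (T x) := by
    intro x; rw [← hT]; rfl
  have key : ∀ x, ⟪(adjoint Q₃ * T) x, x⟫ = ⟪Q₁ (T x), T x⟫ := by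
    intro x
    calc ⟪(adjoint Q₃ * T) x, x⟫ = ⟪T x, Q₃ x⟫ := by
          rw [ContinuousLinearMap.mul_apply, ContinuousLinearMap.adjoint_inner_left]
      _ = ⟪Q₁ (T x), T x⟫ := by rw [hQ3, real_inner_comm]
  constructor
  · intro x; rw [key]; exact hQ₁_pos _
  · intro x
    rw [key]
    set y := T x with hy
    set a := ⟪Q₁ y, y⟫ with ha
    have ha0 : 0 ≤ a := hQ₁_pos y
    have h2 : a = ⟪adjoint Q₃ y, x⟫ := by
      rw [ContinuousLinearMap.adjoint_inner_left, hQ3 x, real_inner_comm]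
    have h3 : a ≤ ‖adjoint Q₃ y‖ * ‖x‖ := h2 ▸ real_inner_le_norm _ _
    have h4 : ‖adjoint Q₃ y‖ ^ 2 = ⟪Q₂ y, y⟫ := by
      rw [hQ₂, ContinuousLinearMap.mul_apply, real_inner_comm,
        ← ContinuousLinearMap.adjoint_inner_left, real_inner_self_eq_norm_sq]
    have h5 : a ^ 2 ≤ C * a * ‖x‖ ^ 2 := by
      have h6 : a ^ 2 ≤ ‖adjoint Q₃ y‖ ^ 2 * ‖x‖ ^ 2 := by
        nlinarith [norm_nonneg (adjoint Q₃ y), norm_nonneg x]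
      have h7 := hle y
      nlinarith [sq_nonneg ‖x‖]
    rcases eq_or_lt_of_le ha0 with h | h
    · nlinarith [sq_nonneg ‖x‖]
    · nlinarith [sq_nonneg ‖x‖]
end
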